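/- Let M > 0 and a > 3√3·M be real numbers. Define ρ₀ = (1/3)·(π − arccos(3√3·M/a)), r₁ = (2a/√3)·cos(ρ₀ − 2π/3) and r₂ = (2a/√3)·cos(ρ₀). Then ρ₀ ∈ (π/6, π/3), r₁ ∈ (0, a/√3), r₂ ∈ (a/√3, a), and for every r > 0 one has 1 − 2M/r − r²/a² > 0 if and only if r₁ < r < r₂. -/

import Mathlib

/-- For the closed (K = +1) McVittie spacetime with `a > 3√3·M`, the allowed
region `1 - 2M/r - r²/a² > 0` is exactly the interval `(r₁, r₂)` given by the
trigonometric solution formula for the two positive roots of the associated cubic. -/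
theorem mcvittie_closed_allowed_region (M a : ℝ) (hM : 0 < M)
    (ha : 3 * Real.sqrt 3 * M < a)
    (ρ₀ r₁ r₂ : ℝ)
    (hρ₀ : ρ₀ = (1 / 3) * (Real.pi - Real.arccos (3 * Real.sqrt 3 * M / a)))
    (hr₁ : r₁ = (2 * a / Real.sqrt 3) * Real.cos (ρ₀ - 2 * Real.pi / 3))
    (hr₂ : r₂ = (2 * a / Real.sqrt 3) * Real.cos ρ₀) :
    ρ₀ ∈ Set.Ioo (Real.pi / 6) (Real.pi / 3) ∧
    r₁ ∈ Set.Ioo 0 (a / Real.sqrt 3) ∧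
    r₂ ∈ Set.Ioo (a / Real.sqrt 3) a ∧
    ∀ r : ℝ, 0 < r → (0 < 1 - 2 * M / r - r ^ 2 / a ^ 2 ↔ r₁ < r ∧ r < r₂) := by
  set s := Real.sqrt 3 with hs
  have hs0 : (0:ℝ) < s := Real.sqrt_pos.mpr (by norm_num)
  have hs2 : s ^ 2 = 3 := Real.sq_sqrt (by norm_num)
  have ha0 : (0:ℝ) < a := lt_trans (by positivity) ha
  set c := 3 * s * M / a with hc
  have hc0 : 0 < c := by positivity
  have hc1 : c < 1 := (div_lt_one ha0).mpr ha
  have hacos_lt : Real.arccos c < Real.pi / 2 := by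
    rw [Real.arccos, sub_lt_iff_lt_add]
    nlinarith [Real.arcsin_pos.mpr hc0]
  have hacos_pos : 0 < Real.arccos c := Real.arccos_pos.mpr hc1
  have hpi : 0 < Real.pi := Real.pi_pos
  have hρlo : Real.pi / 6 < ρ₀ := by rw [hρ₀]; linarith
  have hρhi : ρ₀ < Real.pi / 3 := by rw [hρ₀]; linarith
  have h3ρ : Real.cos (3 * ρ₀) = -c := by
    have h : 3 * ρ₀ = Real.pi - Real.arccos c := by rw [hρ₀]; ring
    rw [h, Real.cos_pi_sub, Real.cos_arccos (by linarith) (by linarith)]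
  have htriple : ∀ θ : ℝ, Real.cos (3 * θ) = -c →
      ((2 * a / s) * Real.cos θ) ^ 3 - a ^ 2 * ((2 * a / s) * Real.cos θ) + 2 * M * a ^ 2 = 0 := by
    intro θ hθ
    have ht := Real.cos_three_mul θ
    rw [hθ] at ht
    set x := Real.cos θ
    have hne : s ≠ 0 := ne_of_gt hs0
    have hane : a ≠ 0 := ne_of_gt ha0
    have hu : s * s⁻¹ = 1 := mul_inv_cancel₀ hne
    have hca : c * a = 3 * s * M := by rw [hc]; exact div_mul_cancel₀ _ hane
    have hu2 : s⁻¹ ^ 2 * 3 = 1 := by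
      rw [← hs2, inv_pow, inv_mul_cancel₀ (pow_ne_zero 2 hne)]
    linear_combination (8/3*a^3*s⁻¹*x^3) * hu2 - (2/3*a^3*s⁻¹) * ht - (2/3*a^2*s⁻¹) * hca - (2*a^2*M) * hu
  have e2 : r₂ ^ 3 - a ^ 2 * r₂ + 2 * M * a ^ 2 = 0 := by
    rw [hr₂]; exact htriple ρ₀ h3ρ
  have e1 : r₁ ^ 3 - a ^ 2 * r₁ + 2 * M * a ^ 2 = 0 := by
    rw [hr₁]
    apply htriple
    have h : 3 * (ρ₀ - 2 * Real.pi / 3) = 3 * ρ₀ - 2 * Real.pi := by ring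
    rw [h, Real.cos_sub_two_pi, h3ρ]
  have hcos3 : Real.cos (Real.pi / 3) = 1 / 2 := Real.cos_pi_div_three
  have hcos6 : Real.cos (Real.pi / 6) = s / 2 := Real.cos_pi_div_six
  have hmono : ∀ x y : ℝ, 0 ≤ x → y ≤ Real.pi → x < y → Real.cos y < Real.cos x :=
    fun x y hx hy hxy => Real.cos_lt_cos_of_nonneg_of_le_pi hx hy hxy
  have hcρhi : Real.cos ρ₀ < s / 2 := by
    rw [← hcos6]; exact hmono _ _ (by positivity) (by linarith) hρlo
  have hcρlo : 1 / 2 < Real.cos ρ₀ := by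
    rw [← hcos3]; exact hmono _ _ (by linarith) (by linarith) hρhi
  have h2as : (0:ℝ) < 2 * a / s := by positivity
  have hr₂lo : a / s < r₂ := by
    rw [hr₂]
    calc a / s = 2 * a / s * (1 / 2) := by ring
    _ < _ := (mul_lt_mul_iff_right₀ h2as).mpr hcρlo
  have hr₂hi : r₂ < a := by
    rw [hr₂]
    calc 2 * a / s * Real.cos ρ₀ < 2 * a / s * (s / 2) := (mul_lt_mul_iff_right₀ h2as).mpr hcρhi
    _ = a := by field_simp
  have hc1eq : Real.cos (ρ₀ - 2 * Real.pi / 3) = Real.cos (2 * Real.pi / 3 - ρ₀) := by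
    rw [← Real.cos_neg]; ring_nf
  have hcρ₁hi : Real.cos (ρ₀ - 2 * Real.pi / 3) < 1 / 2 := by
    rw [hc1eq, ← hcos3]
    exact hmono _ _ (by linarith) (by linarith) (by linarith)
  have hcρ₁lo : 0 < Real.cos (ρ₀ - 2 * Real.pi / 3) := by
    rw [hc1eq]
    apply Real.cos_pos_of_mem_Ioo
    constructor <;> [linarith; linarith]
  have hr₁lo : 0 < r₁ := by rw [hr₁]; positivity
  have hr₁hi : r₁ < a / s := by
    rw [hr₁]
    calc 2 * a / s * Real.cos (ρ₀ - 2 * Real.pi / 3) < 2 * a / s * (1 / 2) :=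
      (mul_lt_mul_iff_right₀ h2as).mpr hcρ₁hi
    _ = a / s := by ring
  have hr12 : r₁ < r₂ := lt_trans hr₁hi hr₂lo
  have hr₂pos : 0 < r₂ := lt_trans hr₁lo hr12
  have hsum : r₁ ^ 2 + r₁ * r₂ + r₂ ^ 2 = a ^ 2 := by
    have hne : r₁ - r₂ ≠ 0 := sub_ne_zero.mpr (ne_of_lt hr12)
    have h : (r₁ - r₂) * (r₁ ^ 2 + r₁ * r₂ + r₂ ^ 2 - a ^ 2) = 0 := by
      linear_combination e1 - e2
    rcases mul_eq_zero.mp h with h' | h'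
    · exact absurd h' hne
    · linarith
  refine ⟨⟨hρlo, hρhi⟩, ⟨hr₁lo, hr₁hi⟩, ⟨hr₂lo, hr₂hi⟩, ?_⟩
  intro r hr
  have hfac : r ^ 3 - a ^ 2 * r + 2 * M * a ^ 2 = (r - r₁) * (r - r₂) * (r + r₁ + r₂) := by
    linear_combination (r - r₁) * hsum + e1
  have hD : 0 < r * a ^ 2 := by positivity
  have hprod : (1 - 2 * M / r - r ^ 2 / a ^ 2) * (r * a ^ 2) =
      -((r - r₁) * (r - r₂) * (r + r₁ + r₂)) := by
    rw [← hfac]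
    field_simp
    ring
  have hrsum : (0:ℝ) ≤ r + r₁ + r₂ := by positivity
  constructor
  · intro h
    have h2 : 0 < -((r - r₁) * (r - r₂) * (r + r₁ + r₂)) := hprod ▸ mul_pos h hD
    constructor
    · by_contra h'
      push_neg at h'
      have hP : 0 ≤ (r₁ - r) * (r₂ - r) * (r + r₁ + r₂) :=
        mul_nonneg (mul_nonneg (sub_nonneg.mpr h')
          (sub_nonneg.mpr (le_of_lt (lt_of_le_of_lt h' hr12)))) hrsum
      have hEq : (r₁ - r) * (r₂ - r) * (r + r₁ + r₂) =
          (r - r₁) * (r - r₂) * (r + r₁ + r₂) := by ring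
      linarith
    · by_contra h'
      push_neg at h'
      have hP : 0 ≤ (r - r₁) * (r - r₂) * (r + r₁ + r₂) :=
        mul_nonneg (mul_nonneg
          (sub_nonneg.mpr (le_of_lt (lt_of_lt_of_le hr12 h'))) (sub_nonneg.mpr h')) hrsum
      linarith
  · rintro ⟨h1, h2⟩
    have h3 : 0 < (1 - 2 * M / r - r ^ 2 / a ^ 2) * (r * a ^ 2) := by
      rw [hprod]
      have hP : 0 < (r - r₁) * (r₂ - r) * (r + r₁ + r₂) :=
        mul_pos (mul_pos (sub_pos.mpr h1) (sub_pos.mpr h2)) (by positivity)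
      have hEq : (r - r₁) * (r₂ - r) * (r + r₁ + r₂) =
          -((r - r₁) * (r - r₂) * (r + r₁ + r₂)) := by ring
      linarith
    by_contra h'
    push_neg at h'
    have := mul_nonpos_of_nonpos_of_nonneg h' hD.le
    linarith
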